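/- Let A ⊆ [0,1] be a finite set closed under the involution a ↦ 1 − a, and for each a ∈ A and each χ = (χ₁,χ₂,χ₃) ∈ {0,1}³ let b_{a,χ} : ℝ × ℂ → ℂ. For τ ∈ ℝ and finitely supported v, w : ℤ^d → ℂ set u^{(0)} := v, u^{(1)} := w and let R_τ(v,w) denote the relation: for every k ∈ ℤ^d, w_k = e^{−iτ|k|²} v_k + e^{−iτ|k|²} Σ_{−k₁+k₂+k₃=k} Σ_{a∈A} Σ_{χ∈{0,1}³} b_{a,χ}(τ, 2iτ|k₁|²) · e^{2 i a τ (k₂·k₃ − k₁·k₂ − k₁·k₃)} · e^{−iχ₁τ|k₁|²} conj(u^{(χ₁)}_{k₁}) · e^{iχ₂τ|k₂|²} u^{(χ₂)}_{k₂} · e^{iχ₃τ|k₃|²} u^{(χ₃)}_{k₃}. If the coefficients satisfy −exp(z) · b_{a,χ}(−τ, −z) = b_{1−a, 1−χ}(τ, z) for all a ∈ A, all χ ∈ {0,1}³, all τ ∈ ℝ and all z ∈ ℂ (where 1−χ := (1−χ₁, 1−χ₂, 1−χ₃)), then R is symmetric: for all τ ∈ ℝ and all finitely supported v, w, R_τ(v,w)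 holds if and only if R_{−τ}(w,v) holds. -/
import Mathlib


/-- `|k|² = k·k` for a frequency `k ∈ ℤ^d`, as a complex number. -/
noncomputable def nsq {d : ℕ} (k : Fin d → ℤ) : ℂ := ∑ i, ((k i : ℂ)) ^ 2

/-- Dot product `k·m` of two frequencies in `ℤ^d`, as a complex number. -/
noncomputable def dotC {d : ℕ} (k m : Fin d → ℤ) : ℂ := ∑ i, (k i : ℂ) * (m i : ℂ)

/-- One step of the general forest-formula parametrisation of resonance-based schemes
for the cubic NLS equation on `𝕋^d`, in Fourier coordinates, with interpolation nodes
`a ∈ A` and coefficients `b a χ τ z` (the leaf index `χ : Fin 3 → Bool` records whether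
each leaf is evaluated at the left endpoint `u⁰ = v` or the right endpoint `u¹ = w`):
`forestR A b τ v w` holds iff for every `k ∈ ℤ^d`,
`w_k = e^{-iτ|k|²} v_k + e^{-iτ|k|²} Σ_{-k₁+k₂+k₃=k} Σ_{a∈A} Σ_{χ} b_{a,χ}(τ, 2iτ|k₁|²)
   e^{2iaτ(k₂·k₃ - k₁·k₂ - k₁·k₃)} e^{-iχ₁τ|k₁|²} conj(u^{(χ₁)}_{k₁})
   e^{iχ₂τ|k₂|²} u^{(χ₂)}_{k₂} e^{iχ₃τ|k₃|²} u^{(χ₃)}_{k₃}`,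
where the convolution constraint `-k₁+k₂+k₃ = k` has been solved as `k₃ = k + k₁ - k₂`. -/
noncomputable def forestR {d : ℕ} (A : Finset ℝ)
    (b : ℝ → (Fin 3 → Bool) → ℝ → ℂ → ℂ)
    (τ : ℝ) (v w : (Fin d → ℤ) →₀ ℂ) : Prop :=
  ∀ k : Fin d → ℤ,
    w k = Complex.exp (-(Complex.I * (τ : ℂ) * nsq k)) * v k
      + Complex.exp (-(Complex.I * (τ : ℂ) * nsq k)) *
          (∑ᶠ k₁ : Fin d → ℤ, ∑ᶠ k₂ : Fin d → ℤ,
            ∑ a ∈ A, ∑ χ : Fin 3 → Bool,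
              b a χ τ (2 * Complex.I * (τ : ℂ) * nsq k₁) *
                Complex.exp (2 * Complex.I * (a : ℂ) * (τ : ℂ) *
                  (dotC k₂ (k + k₁ - k₂) - dotC k₁ k₂ - dotC k₁ (k + k₁ - k₂))) *
                (Complex.exp (-((if χ 0 then (1 : ℂ) else 0) * Complex.I * (τ : ℂ) * nsq k₁)) *
                    (starRingEnd ℂ) ((if χ 0 then w else v) k₁)) *
                (Complex.exp ((if χ 1 then (1 : ℂ) else 0) * Complex.I * (τ : ℂ) * nsq k₂) *
                    (if χ 1 then w else v) k₂) *
                (Complex.exp ((if χ 2 then (1 : ℂ) else 0) * Complex.I * (τ : ℂ) *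
                      nsq (k + k₁ - k₂)) *
                    (if χ 2 then w else v) (k + k₁ - k₂)))


lemma nsq_key {d : ℕ} (k k₁ k₂ : Fin d → ℤ) :
    nsq k = nsq k₁ + nsq k₂ + nsq (k + k₁ - k₂)
      + 2 * (dotC k₂ (k + k₁ - k₂) - dotC k₁ k₂ - dotC k₁ (k + k₁ - k₂)) := by
  simp only [nsq, dotC, Finset.mul_sum, ← Finset.sum_add_distrib, ← Finset.sum_sub_distrib]
  refine Finset.sum_congr rfl fun i _ => ?_
  simp only [Pi.add_apply, Pi.sub_apply]
  push_cast
  ring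

lemma term_helper (B x₁ x₂ x₃ ε z p₁ p₂ p₃ p₄ q₁ q₂ q₃ q₄ : ℂ)
    (h : ε + z + p₁ + p₂ + p₃ + p₄ = q₁ + q₂ + q₃ + q₄) :
    -Complex.exp ε * (-Complex.exp z * B * Complex.exp p₁ * (Complex.exp p₂ * x₁) *
        (Complex.exp p₃ * x₂) * (Complex.exp p₄ * x₃))
      = B * Complex.exp q₁ * (Complex.exp q₂ * x₁) * (Complex.exp q₃ * x₂) *
        (Complex.exp q₄ * x₃) := by
  have h2 := congrArg Complex.exp h
  simp only [Complex.exp_add] at h2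
  linear_combination (B * x₁ * x₂ * x₃) * h2

lemma iteNotVal {α : Sort*} (t : Bool) (x y : α) :
    (if !t then x else y) = if t then y else x := by cases t <;> rfl

lemma iteCoeff (t : Bool) : (if t then (0:ℂ) else 1) = 1 - (if t then 1 else 0) := by
  cases t <;> simp

lemma hsmulC {ι : Sort*} (c : ℂ) (f : ι → ℂ) : c * ∑ᶠ x, f x = ∑ᶠ x, c * f x := by
  simpa [smul_eq_mul] using smul_finsum c f

lemma sum_eq {d : ℕ} (A : Finset ℝ) (hAinv : ∀ a ∈ A, 1 - a ∈ A)
    (b : ℝ → (Fin 3 → Bool) → ℝ → ℂ → ℂ)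
    (hb : ∀ a ∈ A, ∀ (χ : Fin 3 → Bool) (τ : ℝ) (z : ℂ),
      -(Complex.exp z) * b a χ (-τ) (-z) = b (1 - a) (fun j => !χ j) τ z)
    (τ : ℝ) (v w : (Fin d → ℤ) →₀ ℂ) (k : Fin d → ℤ) :
    (∑ᶠ k₁ : Fin d → ℤ, ∑ᶠ k₂ : Fin d → ℤ,
            ∑ a ∈ A, ∑ χ : Fin 3 → Bool,
              b a χ (-τ) (2 * Complex.I * ((-τ : ℝ) : ℂ) * nsq k₁) *
                Complex.exp (2 * Complex.I * (a : ℂ) * ((-τ : ℝ) : ℂ) *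
                  (dotC k₂ (k + k₁ - k₂) - dotC k₁ k₂ - dotC k₁ (k + k₁ - k₂))) *
                (Complex.exp (-((if χ 0 then (1 : ℂ) else 0) * Complex.I * ((-τ : ℝ) : ℂ) * nsq k₁)) *
                    (starRingEnd ℂ) ((if χ 0 then v else w) k₁)) *
                (Complex.exp ((if χ 1 then (1 : ℂ) else 0) * Complex.I * ((-τ : ℝ) : ℂ) * nsq k₂) *
                    (if χ 1 then v else w) k₂) *
                (Complex.exp ((if χ 2 then (1 : ℂ) else 0) * Complex.I * ((-τ : ℝ) : ℂ) *
                      nsq (k + k₁ - k₂)) *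
                    (if χ 2 then v else w) (k + k₁ - k₂)))
    = -Complex.exp (-(Complex.I * (τ : ℂ) * nsq k)) *
      (∑ᶠ k₁ : Fin d → ℤ, ∑ᶠ k₂ : Fin d → ℤ,
            ∑ a ∈ A, ∑ χ : Fin 3 → Bool,
              b a χ τ (2 * Complex.I * (τ : ℂ) * nsq k₁) *
                Complex.exp (2 * Complex.I * (a : ℂ) * (τ : ℂ) *
                  (dotC k₂ (k + k₁ - k₂) - dotC k₁ k₂ - dotC k₁ (k + k₁ - k₂))) *
                (Complex.exp (-((if χ 0 then (1 : ℂ) else 0) * Complex.I * (τ : ℂ) * nsq k₁)) *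
                    (starRingEnd ℂ) ((if χ 0 then w else v) k₁)) *
                (Complex.exp ((if χ 1 then (1 : ℂ) else 0) * Complex.I * (τ : ℂ) * nsq k₂) *
                    (if χ 1 then w else v) k₂) *
                (Complex.exp ((if χ 2 then (1 : ℂ) else 0) * Complex.I * (τ : ℂ) *
                      nsq (k + k₁ - k₂)) *
                    (if χ 2 then w else v) (k + k₁ - k₂))) := by
  simp only [Complex.ofReal_neg, hsmulC, Finset.mul_sum]
  refine finsum_congr fun k₁ => finsum_congr fun k₂ => ?_
  refine Finset.sum_nbij' (fun a => 1 - a) (fun a => 1 - a)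
    (fun a ha => hAinv a ha) (fun a ha => hAinv a ha)
    (fun a _ => by ring) (fun a _ => by ring) (fun a ha => ?_)
  refine (Fintype.sum_bijective (fun (χ : Fin 3 → Bool) (j : Fin 3) => !(χ j))
    (Function.Involutive.bijective fun χ => funext fun j => Bool.not_not (χ j))
    _ _ fun χ => ?_).symm
  have hbb : b (1 - a) χ τ (2 * Complex.I * (τ:ℂ) * nsq k₁)
      = -(Complex.exp (2 * Complex.I * (τ:ℂ) * nsq k₁)) *
        b a (fun j => !χ j) (-τ) (-(2 * Complex.I * (τ:ℂ) * nsq k₁)) := by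
    have h := hb a ha (fun j => !χ j) τ (2 * Complex.I * (τ:ℂ) * nsq k₁)
    simp only [Bool.not_not] at h
    exact h.symm
  rw [show (2 * Complex.I * -(τ:ℂ) * nsq k₁) = -(2 * Complex.I * (τ:ℂ) * nsq k₁) from by ring,
    hbb]
  simp only [iteNotVal, iteCoeff]
  refine term_helper _ _ _ _ _ _ _ _ _ _ _ _ _ _ ?_
  push_cast
  linear_combination (-(Complex.I * (τ:ℂ))) * nsq_key k k₁ k₂


lemma forestR_forward {d : ℕ} (A : Finset ℝ) (hAinv : ∀ a ∈ A, 1 - a ∈ A)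
    (b : ℝ → (Fin 3 → Bool) → ℝ → ℂ → ℂ)
    (hb : ∀ a ∈ A, ∀ (χ : Fin 3 → Bool) (τ : ℝ) (z : ℂ),
      -(Complex.exp z) * b a χ (-τ) (-z) = b (1 - a) (fun j => !χ j) τ z)
    (τ : ℝ) (v w : (Fin d → ℤ) →₀ ℂ)
    (h : forestR A b τ v w) : forestR A b (-τ) w v := by
  intro k
  have hk := h k
  rw [sum_eq A hAinv b hb τ v w k, hk]
  have hEE : Complex.exp (-(Complex.I * ((-τ : ℝ) : ℂ) * nsq k)) *
      Complex.exp (-(Complex.I * (τ : ℂ) * nsq k)) = 1 := by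
    rw [← Complex.exp_add,
      show -(Complex.I * ((-τ : ℝ) : ℂ) * nsq k) + -(Complex.I * (τ : ℂ) * nsq k) = 0 from by
        push_cast; ring,
      Complex.exp_zero]
  linear_combination (-(v k)) * hEE

/-- If the finite set `A ⊆ [0,1]` of interpolation nodes is closed under `a ↦ 1 - a`
and the coefficients satisfy `-exp(z) · b_{a,χ}(-τ,-z) = b_{1-a,1-χ}(τ,z)`, then the
general forest-formula scheme is symmetric: `R_τ(v,w)` holds iff `R_{-τ}(w,v)` holds. -/
theorem forestR_symmetric {d : ℕ} (A : Finset ℝ)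
    (hA01 : ∀ a ∈ A, a ∈ Set.Icc (0 : ℝ) 1)
    (hAinv : ∀ a ∈ A, 1 - a ∈ A)
    (b : ℝ → (Fin 3 → Bool) → ℝ → ℂ → ℂ)
    (hb : ∀ a ∈ A, ∀ (χ : Fin 3 → Bool) (τ : ℝ) (z : ℂ),
      -(Complex.exp z) * b a χ (-τ) (-z) = b (1 - a) (fun j => !χ j) τ z) :
    ∀ (τ : ℝ) (v w : (Fin d → ℤ) →₀ ℂ),
      forestR A b τ v w ↔ forestR A b (-τ) w v := by
  intro τ v w
  constructor
  · exact forestR_forward A hAinv b hb τ v w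
  · intro h
    have h2 := forestR_forward A hAinv b hb (-τ) w v h
    rwa [neg_neg] at h2
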